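/- Let f : ℤ^{n+m} → ℝ ∪ {+∞} be an integrally convex function and define g : ℤ^n → ℝ ∪ {+∞} by g(x) = inf { f(x,y) : y ∈ ℤ^m }. If g(x) > −∞ for every x ∈ ℤ^n, then g is an integrally convex function. -/

import Mathlib

open scoped BigOperators

noncomputable section

variable {ι : Type*} [Fintype ι]

/-- Embedding of integer vectors into real vectors. -/
def embedZ (z : ι → ℤ) : ι → ℝ := fun i => (z i : ℝ)

/-- The integral neighborhood `N(x)` of a real vector `x`. -/
def IntNbhd (x : ι → ℝ) : Set (ι → ℤ) := {z | ∀ i, |x i - (z i : ℝ)| < 1}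

/-- A set `S ⊆ ℤ^ι` is integrally convex if every point `x` of its convex hull
belongs to the convex hull of `S ∩ N(x)`. -/
def IntegrallyConvexSet (S : Set (ι → ℤ)) : Prop :=
  ∀ x ∈ convexHull ℝ (embedZ '' S), x ∈ convexHull ℝ (embedZ '' (S ∩ IntNbhd x))

/-- The local convex extension `f̃` of `f : ℤ^ι → ℝ ∪ {+∞}`. -/
def LocalConvexExt (f : (ι → ℤ) → EReal) (x : ι → ℝ) : EReal :=
  sInf {v : EReal | ∃ (A : Finset (ι → ℤ)) (lam : (ι → ℤ) → ℝ),
    (∀ z ∈ A, z ∈ IntNbhd x) ∧ (∀ z ∈ A, 0 ≤ lam z) ∧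
    (∑ z ∈ A, lam z) = 1 ∧ (∀ i, (∑ z ∈ A, lam z * (z i : ℝ)) = x i) ∧
    v = ∑ z ∈ A, ((lam z : EReal) * f z)}

/-- A function `f : ℤ^ι → ℝ ∪ {+∞}` is integrally convex if its local convex
extension is a convex function on `ℝ^ι`. -/
def IntegrallyConvexFn (f : (ι → ℤ) → EReal) : Prop :=
  ∀ x y : ι → ℝ, ∀ a b : ℝ, 0 ≤ a → 0 ≤ b → a + b = 1 →
    LocalConvexExt f (a • x + b • y) ≤
      (a : EReal) * LocalConvexExt f x + (b : EReal) * LocalConvexExt f y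

/-- Componentwise rounded-up midpoint `⌈(x+y)/2⌉` of two integer vectors. -/
def midUp (x y : ι → ℤ) : ι → ℤ := fun i => ⌈((x i + y i : ℤ) : ℚ) / 2⌉

/-- Componentwise rounded-down midpoint `⌊(x+y)/2⌋` of two integer vectors. -/
def midDown (x y : ι → ℤ) : ι → ℤ := fun i => ⌊((x i + y i : ℤ) : ℚ) / 2⌋

/-- A set `S ⊆ ℤ^ι` is discrete midpoint convex if for all `x, y ∈ S` with
`‖x - y‖∞ ≥ 2`, both `⌈(x+y)/2⌉` and `⌊(x+y)/2⌋` belong to `S`. -/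
def DiscreteMidpointConvexSet (S : Set (ι → ℤ)) : Prop :=
  ∀ x ∈ S, ∀ y ∈ S, (∃ i, 2 ≤ |x i - y i|) → midUp x y ∈ S ∧ midDown x y ∈ S

/-- Globally discrete midpoint convex function: discrete midpoint convexity for
all pairs with `‖x - y‖∞ ≥ 2`. -/
def GloballyDMC (f : (ι → ℤ) → EReal) : Prop :=
  ∀ x y : ι → ℤ, (∃ i, 2 ≤ |x i - y i|) →
    f (midUp x y) + f (midDown x y) ≤ f x + f y

/-- Locally discrete midpoint convex function: effective domain is a discrete
midpoint convex set, and discrete midpoint convexity holds whenever `‖x - y‖∞ = 2`. -/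
def LocallyDMC (f : (ι → ℤ) → EReal) : Prop :=
  DiscreteMidpointConvexSet {x | f x ≠ ⊤} ∧
  ∀ x y : ι → ℤ, (∀ i, |x i - y i| ≤ 2) → (∃ i, |x i - y i| = 2) →
    f (midUp x y) + f (midDown x y) ≤ f x + f y

/-- An integer interval (box) `B = [a, b] ∩ ℤ^ι` with bounds
`a ∈ (ℤ ∪ {-∞})^ι`, `b ∈ (ℤ ∪ {+∞})^ι`, `a ≤ b`. -/
def IsIntegerInterval (B : Set (ι → ℤ)) : Prop :=
  ∃ a b : ι → EReal,
    (∀ i, a i = ⊥ ∨ ∃ k : ℤ, a i = ((k : ℝ) : EReal)) ∧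
    (∀ i, b i = ⊤ ∨ ∃ k : ℤ, b i = ((k : ℝ) : EReal)) ∧
    (∀ i, a i ≤ b i) ∧
    B = {x | ∀ i, a i ≤ ((x i : ℝ) : EReal) ∧ ((x i : ℝ) : EReal) ≤ b i}

/-- Separable convex function: a sum of univariate discrete convex functions. -/
def SeparableConvex (φ : (ι → ℤ) → EReal) : Prop :=
  ∃ φi : ι → ℤ → EReal,
    (∀ i t, φi i t ≠ ⊥) ∧
    (∀ i t, 2 * φi i t ≤ φi i (t - 1) + φi i (t + 1)) ∧
    (∀ x, φ x = ∑ i, φi i (x i))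


lemma ereal_sum_ne_bot {α : Type*} (A : Finset α) (t : α → EReal)
    (h : ∀ a ∈ A, t a ≠ ⊥) : ∑ a ∈ A, t a ≠ ⊥ := by
  classical
  induction A using Finset.cons_induction with
  | empty => simp
  | cons a s ha ih =>
    rw [Finset.sum_cons]
    simp only [ne_eq, EReal.add_eq_bot_iff, not_or]
    exact ⟨h a (Finset.mem_cons_self a s), ih fun b hb => h b (Finset.mem_cons.2 (Or.inr hb))⟩

lemma ereal_sum_eq_top {α : Type*} (A : Finset α) (t : α → EReal)
    (h : ∀ a ∈ A, t a ≠ ⊥) {a0 : α} (ha0 : a0 ∈ A) (ht : t a0 = ⊤) :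
    ∑ a ∈ A, t a = ⊤ := by
  classical
  rw [← Finset.add_sum_erase A t ha0, ht]
  exact EReal.top_add_of_ne_bot (ereal_sum_ne_bot _ _ fun b hb => h b (Finset.mem_of_mem_erase hb))

lemma ereal_sum_coe_mul {α : Type*} (A : Finset α) (lam : α → ℝ)
    (h : ∀ a ∈ A, 0 ≤ lam a) (c : EReal) :
    ∑ a ∈ A, (lam a : EReal) * c = ((∑ a ∈ A, lam a : ℝ) : EReal) * c := by
  classical
  induction A using Finset.cons_induction with
  | empty => simp
  | cons a s ha ih =>
    rw [Finset.sum_cons, Finset.sum_cons, EReal.coe_add,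
      EReal.right_distrib_of_nonneg (by exact_mod_cast h a (Finset.mem_cons_self a s))
        (by exact_mod_cast Finset.sum_nonneg fun b hb => h b (Finset.mem_cons.2 (Or.inr hb))),
      ih fun b hb => h b (Finset.mem_cons.2 (Or.inr hb))]

lemma ereal_coe_mul_ne_bot {c : ℝ} (hc : 0 ≤ c) {v : EReal} (hv : v ≠ ⊥) :
    (c : EReal) * v ≠ ⊥ := by
  rcases eq_or_lt_of_le hc with rfl | hc'
  · simp
  · induction v with
    | bot => exact absurd rfl hv
    | coe r => rw [← EReal.coe_mul]; exact EReal.coe_ne_bot _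
    | top => rw [EReal.coe_mul_top_of_pos hc']; exact (by simp)

lemma ereal_coe_mul_add {c : ℝ} (hc : 0 ≤ c) {u v : EReal} (hu : u ≠ ⊥) (hv : v ≠ ⊥) :
    (c : EReal) * (u + v) = (c : EReal) * u + (c : EReal) * v := by
  rcases eq_or_lt_of_le hc with rfl | hc'
  · simp
  · induction u with
    | bot => exact absurd rfl hu
    | coe r =>
      induction v with
      | bot => exact absurd rfl hv
      | coe s => norm_cast; ring
      | top =>
        rw [EReal.add_top_of_ne_bot (EReal.coe_ne_bot r), EReal.coe_mul_top_of_pos hc',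
          ← EReal.coe_mul, EReal.add_top_of_ne_bot (EReal.coe_ne_bot _)]
    | top =>
      rw [EReal.top_add_of_ne_bot hv, EReal.coe_mul_top_of_pos hc',
        EReal.top_add_of_ne_bot (ereal_coe_mul_ne_bot hc hv)]

lemma ereal_coe_mul_sum {α : Type*} {c : ℝ} (hc : 0 ≤ c) (A : Finset α) (t : α → EReal)
    (h : ∀ a ∈ A, t a ≠ ⊥) :
    (c : EReal) * ∑ a ∈ A, t a = ∑ a ∈ A, (c : EReal) * t a := by
  classical
  induction A using Finset.cons_induction with
  | empty => simp
  | cons a s ha ih =>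
    rw [Finset.sum_cons, Finset.sum_cons,
      ereal_coe_mul_add hc (h a (Finset.mem_cons_self a s))
        (ereal_sum_ne_bot _ _ fun b hb => h b (Finset.mem_cons.2 (Or.inr hb))),
      ih fun b hb => h b (Finset.mem_cons.2 (Or.inr hb))]
lemma intNbhd_finite (x : ι → ℝ) : (IntNbhd x).Finite := by
  apply Set.Finite.subset (Set.Finite.pi (fun i => Set.finite_Icc (⌈x i - 1⌉) (⌊x i + 1⌋)))
  intro z hz
  simp only [Set.mem_pi, Set.mem_univ, Set.mem_Icc, forall_true_left]
  intro i
  have h := abs_lt.1 (hz i)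
  constructor
  · exact Int.ceil_le.2 (by linarith [h.2])
  · exact Int.le_floor.2 (by linarith [h.1])

lemma lce_ne_bot (f : (ι → ℤ) → EReal) (hf : ∀ z, f z ≠ ⊥) (x : ι → ℝ) :
    LocalConvexExt f x ≠ ⊥ := by
  classical
  obtain ⟨F, hF⟩ := (intNbhd_finite x).exists_finset_coe
  set c : ℝ := (insert (0:ℝ) (F.image fun z => (f z).toReal)).min' (by simp) with hc
  have hcz : ∀ z ∈ IntNbhd x, (c : EReal) ≤ f z := by
    intro z hz
    rcases eq_or_ne (f z) ⊤ with h | h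
    · exact h ▸ le_top
    · have : c ≤ (f z).toReal := by
        apply Finset.min'_le
        exact Finset.mem_insert_of_mem (Finset.mem_image_of_mem _ (by rw [← hF] at hz; exact hz))
      calc (c : EReal) ≤ ((f z).toReal : EReal) := by exact_mod_cast this
        _ = f z := EReal.coe_toReal h (hf z)
  have : (c : EReal) ≤ LocalConvexExt f x := by
    apply le_sInf
    rintro v ⟨A, lam, hnb, hpos, hsum, -, rfl⟩
    calc (c : EReal) = ((∑ z ∈ A, lam z : ℝ) : EReal) * (c : EReal) := by
          rw [hsum]; simp
      _ = ∑ z ∈ A, (lam z : EReal) * (c : EReal) := (ereal_sum_coe_mul A lam hpos _).symm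
      _ ≤ ∑ z ∈ A, (lam z : EReal) * f z := by
          apply Finset.sum_le_sum
          intro z hz
          exact mul_le_mul_of_nonneg_left (hcz z (hnb z hz)) (by exact_mod_cast hpos z hz)
  exact fun h => absurd (h ▸ this) (by simp)

lemma lce_le_f (f : (ι → ℤ) → EReal) (p : ι → ℤ) :
    LocalConvexExt f (embedZ p) ≤ f p := by
  classical
  have : f p ∈ {v : EReal | ∃ (A : Finset (ι → ℤ)) (lam : (ι → ℤ) → ℝ),
    (∀ z ∈ A, z ∈ IntNbhd (embedZ p)) ∧ (∀ z ∈ A, 0 ≤ lam z) ∧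
    (∑ z ∈ A, lam z) = 1 ∧ (∀ i, (∑ z ∈ A, lam z * (z i : ℝ)) = embedZ p i) ∧
    f p = ∑ z ∈ A, ((lam z : EReal) * f z)} := by
    refine ⟨{p}, fun _ => 1, ?_, by simp, by simp, by simp [embedZ], by simp⟩
    intro z hz
    simp only [Finset.mem_singleton] at hz
    subst hz
    intro i
    simp [embedZ]
  exact sInf_le this
lemma jensen (f : (ι → ℤ) → EReal) (hf : IntegrallyConvexFn f) (hfb : ∀ z, f z ≠ ⊥)
    {α : Type*} (A : Finset α) (lam : α → ℝ) (P : α → ι → ℝ)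
    (h0 : ∀ a ∈ A, 0 ≤ lam a) (h1 : ∑ a ∈ A, lam a = 1) :
    LocalConvexExt f (∑ a ∈ A, lam a • P a) ≤
      ∑ a ∈ A, (lam a : EReal) * LocalConvexExt f (P a) := by
  classical
  induction A using Finset.cons_induction generalizing lam with
  | empty => simp at h1
  | cons a s ha ih =>
    rw [Finset.sum_cons] at h1 ⊢
    rw [Finset.sum_cons]
    have h0a : 0 ≤ lam a := h0 a (Finset.mem_cons_self a s)
    have h0s : ∀ z ∈ s, 0 ≤ lam z := fun z hz => h0 z (Finset.mem_cons.2 (Or.inr hz))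
    set b : ℝ := ∑ z ∈ s, lam z with hbdef
    have hb0 : 0 ≤ b := Finset.sum_nonneg h0s
    rcases eq_or_lt_of_le hb0 with hb | hb
    · -- b = 0 : all weights on s vanish
      have hz0 : ∀ z ∈ s, lam z = 0 :=
        (Finset.sum_eq_zero_iff_of_nonneg h0s).1 hb.symm
      have ht1 : lam a = 1 := by rw [← h1, ← hb]; ring
      have hpt : (lam a • P a + ∑ z ∈ s, lam z • P z) = P a := by
        rw [ht1, one_smul, Finset.sum_eq_zero (fun z hz => by rw [hz0 z hz, zero_smul]),
          add_zero]
      rw [hpt, ht1, Finset.sum_eq_zero (fun z hz => by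
        rw [hz0 z hz]; simp), add_zero]
      simp
    · -- b > 0
      set lam' : α → ℝ := fun z => lam z / b with hlam'
      have h0' : ∀ z ∈ s, 0 ≤ lam' z := fun z hz => div_nonneg (h0s z hz) hb0
      have h1' : ∑ z ∈ s, lam' z = 1 := by
        simp only [hlam', ← Finset.sum_div]
        rw [← hbdef, div_self hb.ne']
      have hIH := ih lam' h0' h1'
      set Q : ι → ℝ := ∑ z ∈ s, lam' z • P z with hQ
      have hpt : lam a • P a + ∑ z ∈ s, lam z • P z = lam a • P a + b • Q := by
        congr 1
        rw [hQ, Finset.smul_sum]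
        apply Finset.sum_congr rfl
        intro z hz
        rw [smul_smul, hlam', mul_div_cancel₀ _ hb.ne']
      rw [hpt]
      refine le_trans (hf (P a) Q (lam a) b h0a hb0 h1) ?_
      refine add_le_add_right ?_ _
      have hne : ∀ z ∈ s, (lam' z : EReal) * LocalConvexExt f (P z) ≠ ⊥ :=
        fun z hz => ereal_coe_mul_ne_bot (h0' z hz) (lce_ne_bot f hfb (P z))
      calc (b : EReal) * LocalConvexExt f Q
          ≤ (b : EReal) * ∑ z ∈ s, (lam' z : EReal) * LocalConvexExt f (P z) :=
            mul_le_mul_of_nonneg_left hIH (by exact_mod_cast hb0)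
        _ = ∑ z ∈ s, (b : EReal) * ((lam' z : EReal) * LocalConvexExt f (P z)) :=
            ereal_coe_mul_sum hb0 s _ hne
        _ = ∑ z ∈ s, (lam z : EReal) * LocalConvexExt f (P z) := by
            apply Finset.sum_congr rfl
            intro z hz
            rw [← mul_assoc, ← EReal.coe_mul, hlam', mul_div_cancel₀ _ hb.ne']
lemma proj_le (n m : ℕ) (f : ((Fin n ⊕ Fin m) → ℤ) → EReal)
    (g : (Fin n → ℤ) → EReal) (hg : ∀ x, g x = ⨅ y : Fin m → ℤ, f (Sum.elim x y))
    (x : Fin n → ℝ) (Y : Fin m → ℝ) :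
    LocalConvexExt g x ≤ LocalConvexExt f (Sum.elim x Y) := by
  classical
  apply le_sInf
  rintro v ⟨A, lam, hnb, hpos, hsum, hcoord, rfl⟩
  set π : ((Fin n ⊕ Fin m) → ℤ) → (Fin n → ℤ) := fun w => w ∘ Sum.inl with hπ
  set A' : Finset (Fin n → ℤ) := A.image π with hA'
  set lam' : (Fin n → ℤ) → ℝ := fun z => ∑ w ∈ A.filter (fun w => π w = z), lam w with hlam'
  have hmaps : ∀ w ∈ A, π w ∈ A' := fun w hw => Finset.mem_image_of_mem π hw
  have hfib : ∀ (t : ((Fin n ⊕ Fin m) → ℤ) → EReal),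
      ∑ z ∈ A', ∑ w ∈ A.filter (fun w => π w = z), t w = ∑ w ∈ A, t w :=
    fun t => Finset.sum_fiberwise_of_maps_to hmaps t
  have hfibR : ∀ (t : ((Fin n ⊕ Fin m) → ℤ) → ℝ),
      ∑ z ∈ A', ∑ w ∈ A.filter (fun w => π w = z), t w = ∑ w ∈ A, t w :=
    fun t => Finset.sum_fiberwise_of_maps_to hmaps t
  have hglef : ∀ w ∈ A, g (π w) ≤ f w := by
    intro w hw
    rw [hg]
    have : Sum.elim (π w) (w ∘ Sum.inr) = w := by
      funext k; cases k <;> rfl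
    exact le_of_le_of_eq (iInf_le _ (w ∘ Sum.inr)) (by rw [this])
  have hv' : LocalConvexExt g x ≤ ∑ z ∈ A', (lam' z : EReal) * g z := by
    apply sInf_le
    refine ⟨A', lam', ?_, ?_, ?_, ?_, rfl⟩
    · rintro z hz
      obtain ⟨w, hw, rfl⟩ := Finset.mem_image.1 hz
      intro i
      exact hnb w hw (Sum.inl i)
    · intro z hz
      exact Finset.sum_nonneg fun w hw => hpos w (Finset.mem_filter.1 hw).1
    · rw [← hsum]; exact hfibR lam
    · intro i
      have hci := hcoord (Sum.inl i)
      simp only [Sum.elim_inl] at hci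
      rw [← hci, ← hfibR (fun w => lam w * (w (Sum.inl i) : ℝ))]
      apply Finset.sum_congr rfl
      intro z hz
      rw [hlam', Finset.sum_mul]
      apply Finset.sum_congr rfl
      intro w hw
      have := (Finset.mem_filter.1 hw).2
      rw [← this]
      rfl
  refine le_trans hv' ?_
  calc ∑ z ∈ A', (lam' z : EReal) * g z
      = ∑ z ∈ A', ∑ w ∈ A.filter (fun w => π w = z), (lam w : EReal) * g z := by
        apply Finset.sum_congr rfl
        intro z hz
        rw [hlam', ← ereal_sum_coe_mul _ _ (fun w hw => hpos w (Finset.mem_filter.1 hw).1)]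
    _ ≤ ∑ z ∈ A', ∑ w ∈ A.filter (fun w => π w = z), (lam w : EReal) * f w := by
        apply Finset.sum_le_sum
        intro z hz
        apply Finset.sum_le_sum
        intro w hw
        obtain ⟨hwA, hwz⟩ := Finset.mem_filter.1 hw
        exact mul_le_mul_of_nonneg_left (hwz ▸ hglef w hwA) (by exact_mod_cast hpos w hwA)
    _ = ∑ w ∈ A, (lam w : EReal) * f w := hfib _

lemma lift (n m : ℕ) (f : ((Fin n ⊕ Fin m) → ℤ) → EReal) (hfb : ∀ z, f z ≠ ⊥)
    (hf : IntegrallyConvexFn f)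
    (g : (Fin n → ℤ) → EReal) (hg : ∀ x, g x = ⨅ y : Fin m → ℤ, f (Sum.elim x y))
    (hgb : ∀ x, g x ≠ ⊥)
    (x : Fin n → ℝ) (A : Finset (Fin n → ℤ)) (lam : (Fin n → ℤ) → ℝ)
    (hnb : ∀ z ∈ A, z ∈ IntNbhd x) (hpos : ∀ z ∈ A, 0 ≤ lam z)
    (hsum : (∑ z ∈ A, lam z) = 1) (hcoord : ∀ i, (∑ z ∈ A, lam z * (z i : ℝ)) = x i)
    (ε : ℝ) (hε : 0 < ε) :
    ∃ Y : Fin m → ℝ,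
      LocalConvexExt f (Sum.elim x Y) ≤ (∑ z ∈ A, (lam z : EReal) * g z) + (ε : EReal) := by
  classical
  set v : EReal := ∑ z ∈ A, (lam z : EReal) * g z with hv
  rcases eq_or_ne v ⊤ with hvt | hvt
  · refine ⟨0, ?_⟩
    rw [hvt, EReal.top_add_of_ne_bot (EReal.coe_ne_bot ε)]
    exact le_top
  · have key : ∀ z, ∃ w : Fin m → ℤ, z ∈ A →
        (lam z : EReal) * f (Sum.elim z w) ≤ (lam z : EReal) * (g z + (ε : EReal)) := by
      intro z
      by_cases hzA : z ∈ A
      · rcases eq_or_ne (g z) ⊤ with hgt | hgt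
        · -- then lam z must be 0
          have hlz : lam z = 0 := by
            by_contra hlz
            have hlpos : (0:ℝ) < lam z := lt_of_le_of_ne (hpos z hzA) (Ne.symm hlz)
            apply hvt
            apply ereal_sum_eq_top A _ (fun w hw =>
              ereal_coe_mul_ne_bot (hpos w hw) (hgb w)) hzA
            rw [hgt, EReal.coe_mul_top_of_pos (by exact_mod_cast hlpos)]
          refine ⟨0, fun _ => ?_⟩
          rw [hlz]
          simp
        · have hlt : g z < g z + (ε : EReal) := by
            have h1 := EReal.coe_toReal hgt (hgb z)
            rw [← h1, ← EReal.coe_add]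
            exact_mod_cast lt_add_of_pos_right _ hε
          have hlt2 : (⨅ y : Fin m → ℤ, f (Sum.elim z y)) < g z + (ε : EReal) := by
            rw [← hg z]; exact hlt
          obtain ⟨w, hw⟩ := iInf_lt_iff.1 hlt2
          exact ⟨w, fun _ => mul_le_mul_of_nonneg_left hw.le
            (by exact_mod_cast hpos z hzA)⟩
      · exact ⟨0, fun h => absurd h hzA⟩
    choose W hW using key
    set Y : Fin m → ℝ := fun j => ∑ z ∈ A, lam z * ((W z j : ℤ) : ℝ) with hY
    set P : (Fin n → ℤ) → ((Fin n ⊕ Fin m) → ℝ) :=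
      fun z => Sum.elim (embedZ z) (embedZ (W z)) with hP
    have hpt : Sum.elim x Y = ∑ z ∈ A, lam z • P z := by
      funext k
      rw [Finset.sum_apply]
      cases k with
      | inl i =>
        simp only [Sum.elim_inl, Pi.smul_apply, smul_eq_mul]
        rw [← hcoord i]
        rfl
      | inr j =>
        simp only [Sum.elim_inr, Pi.smul_apply, smul_eq_mul]
        rfl
    refine ⟨Y, ?_⟩
    calc LocalConvexExt f (Sum.elim x Y)
        = LocalConvexExt f (∑ z ∈ A, lam z • P z) := by rw [hpt]
      _ ≤ ∑ z ∈ A, (lam z : EReal) * LocalConvexExt f (P z) :=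
          jensen f hf hfb A lam P hpos hsum
      _ ≤ ∑ z ∈ A, (lam z : EReal) * f (Sum.elim z (W z)) := by
          apply Finset.sum_le_sum
          intro z hz
          have : P z = embedZ (Sum.elim z (W z)) := by
            funext k; cases k <;> rfl
          rw [this]
          exact mul_le_mul_of_nonneg_left (lce_le_f f _) (by exact_mod_cast hpos z hz)
      _ ≤ ∑ z ∈ A, (lam z : EReal) * (g z + (ε : EReal)) :=
          Finset.sum_le_sum fun z hz => hW z hz
      _ = ∑ z ∈ A, ((lam z : EReal) * g z + (lam z : EReal) * (ε : EReal)) := by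
          apply Finset.sum_congr rfl
          intro z hz
          exact ereal_coe_mul_add (hpos z hz) (hgb z) (EReal.coe_ne_bot ε)
      _ = v + ∑ z ∈ A, (lam z : EReal) * (ε : EReal) := by
          rw [Finset.sum_add_distrib]
      _ = v + (ε : EReal) := by
          rw [ereal_sum_coe_mul A lam hpos, hsum]
          simp

/-- The projection of an integrally convex function is integrally convex. -/
theorem projection_of_integrally_convex_fn (n m : ℕ)
    (f : ((Fin n ⊕ Fin m) → ℤ) → EReal) (hfbot : ∀ z, f z ≠ ⊥)
    (hf : IntegrallyConvexFn f)
    (g : (Fin n → ℤ) → EReal)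
    (hg : ∀ x, g x = ⨅ y : Fin m → ℤ, f (Sum.elim x y))
    (hgbot : ∀ x, g x ≠ ⊥) :
    IntegrallyConvexFn g := by
  classical
  intro x y a b ha hb hab
  rcases eq_or_lt_of_le ha with rfl | ha'
  · have hb1 : b = 1 := by linarith
    subst hb1
    simp
  rcases eq_or_lt_of_le hb with rfl | hb'
  · have ha1 : a = 1 := by linarith
    subst ha1
    simp
  have hL1b : LocalConvexExt g x ≠ ⊥ := lce_ne_bot g hgbot x
  have hL2b : LocalConvexExt g y ≠ ⊥ := lce_ne_bot g hgbot y
  rcases eq_or_ne (LocalConvexExt g x) ⊤ with hL1 | hL1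
  · rw [hL1, EReal.coe_mul_top_of_pos (by exact_mod_cast ha'),
      EReal.top_add_of_ne_bot (ereal_coe_mul_ne_bot hb hL2b)]
    exact le_top
  rcases eq_or_ne (LocalConvexExt g y) ⊤ with hL2 | hL2
  · rw [hL2, EReal.coe_mul_top_of_pos (by exact_mod_cast hb'),
      EReal.add_top_of_ne_bot (ereal_coe_mul_ne_bot ha hL1b)]
    exact le_top
  set r1 : ℝ := (LocalConvexExt g x).toReal with hr1
  set r2 : ℝ := (LocalConvexExt g y).toReal with hr2
  have e1 : ((r1 : ℝ) : EReal) = LocalConvexExt g x := EReal.coe_toReal hL1 hL1b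
  have e2 : ((r2 : ℝ) : EReal) = LocalConvexExt g y := EReal.coe_toReal hL2 hL2b
  rw [← e1, ← e2, ← EReal.coe_mul, ← EReal.coe_mul, ← EReal.coe_add]
  rw [← EReal.le_of_forall_lt_iff_le]
  intro t ht
  have htR : a * r1 + b * r2 < t := by exact_mod_cast ht
  set ε : ℝ := (t - (a * r1 + b * r2)) / 2 with hεdef
  have hε : 0 < ε := by rw [hεdef]; linarith
  -- combo for x
  have h1 : LocalConvexExt g x < ((r1 + ε : ℝ) : EReal) := by
    rw [← e1]; exact_mod_cast lt_add_of_pos_right _ hε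
  have h2 : LocalConvexExt g y < ((r2 + ε : ℝ) : EReal) := by
    rw [← e2]; exact_mod_cast lt_add_of_pos_right _ hε
  unfold LocalConvexExt at h1 h2
  obtain ⟨v1, hv1mem, hv1lt⟩ := sInf_lt_iff.1 h1
  obtain ⟨v2, hv2mem, hv2lt⟩ := sInf_lt_iff.1 h2
  obtain ⟨A1, lam1, hnb1, hpos1, hsum1, hcoord1, rfl⟩ := hv1mem
  obtain ⟨A2, lam2, hnb2, hpos2, hsum2, hcoord2, rfl⟩ := hv2mem
  obtain ⟨Y1, hY1⟩ := lift n m f hfbot hf g hg hgbot x A1 lam1 hnb1 hpos1 hsum1 hcoord1 ε hε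
  obtain ⟨Y2, hY2⟩ := lift n m f hfbot hf g hg hgbot y A2 lam2 hnb2 hpos2 hsum2 hcoord2 ε hε
  have hb1 : LocalConvexExt f (Sum.elim x Y1) ≤ ((r1 + 2 * ε : ℝ) : EReal) := by
    refine le_trans hY1 ?_
    calc (∑ z ∈ A1, (lam1 z : EReal) * g z) + (ε : EReal)
        ≤ ((r1 + ε : ℝ) : EReal) + (ε : EReal) := add_le_add_left hv1lt.le _
      _ = ((r1 + 2 * ε : ℝ) : EReal) := by norm_cast; ring
  have hb2 : LocalConvexExt f (Sum.elim y Y2) ≤ ((r2 + 2 * ε : ℝ) : EReal) := by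
    refine le_trans hY2 ?_
    calc (∑ z ∈ A2, (lam2 z : EReal) * g z) + (ε : EReal)
        ≤ ((r2 + ε : ℝ) : EReal) + (ε : EReal) := add_le_add_left hv2lt.le _
      _ = ((r2 + 2 * ε : ℝ) : EReal) := by norm_cast; ring
  have hElim : Sum.elim (a • x + b • y) (a • Y1 + b • Y2)
      = a • (Sum.elim x Y1) + b • (Sum.elim y Y2) := by
    funext k
    cases k <;> simp
  have hfinal : a * (r1 + 2 * ε) + b * (r2 + 2 * ε) = t := by
    have : a * (r1 + 2 * ε) + b * (r2 + 2 * ε)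
        = a * r1 + b * r2 + 2 * ε * (a + b) := by ring
    rw [this, hab, hεdef]
    ring
  calc LocalConvexExt g (a • x + b • y)
      ≤ LocalConvexExt f (Sum.elim (a • x + b • y) (a • Y1 + b • Y2)) :=
        proj_le n m f g hg _ _
    _ = LocalConvexExt f (a • (Sum.elim x Y1) + b • (Sum.elim y Y2)) := by rw [hElim]
    _ ≤ (a : EReal) * LocalConvexExt f (Sum.elim x Y1)
        + (b : EReal) * LocalConvexExt f (Sum.elim y Y2) :=
        hf (Sum.elim x Y1) (Sum.elim y Y2) a b ha hb hab
    _ ≤ (a : EReal) * ((r1 + 2 * ε : ℝ) : EReal) + (b : EReal) * ((r2 + 2 * ε : ℝ) : EReal) :=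
        add_le_add (mul_le_mul_of_nonneg_left hb1 (by exact_mod_cast ha))
          (mul_le_mul_of_nonneg_left hb2 (by exact_mod_cast hb))
    _ = ((a * (r1 + 2 * ε) + b * (r2 + 2 * ε) : ℝ) : EReal) := by norm_cast
    _ = ((t : ℝ) : EReal) := by rw [hfinal]
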